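/- Let X, Y be Banach spaces and Q : X → Y a quotient map (bounded linear surjection). If there is a continuous map g : ℝ × Y → Y such that y' = g(t, y) has no solution on any open interval, then there is a continuous map f : ℝ × X → X such that x' = f(t, x) has no solution on any open interval. -/

import Mathlib

open Filter Topology Set Function

/-- Approximate continuous section of a surjective CLM between Banach spaces. -/
lemma approx_section
    {X : Type*} [NormedAddCommGroup X] [NormedSpace ℝ X] [CompleteSpace X]
    {Y : Type*} [NormedAddCommGroup Y] [NormedSpace ℝ Y] [CompleteSpace Y]
    (Q : X →L[ℝ] Y) (hQ : Function.Surjective Q) :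
    ∃ (C : ℝ) (φ : Y → X), 0 < C ∧ Continuous φ ∧
      (∀ y, ‖φ y‖ ≤ C * ‖y‖) ∧ (∀ y, ‖y - Q (φ y)‖ ≤ ‖y‖ / 2) := by
  obtain ⟨C₀, hC₀, hC⟩ := ContinuousLinearMap.exists_preimage_norm_le Q hQ
  -- choose preimages
  choose sec hsec hsecnorm using hC
  set Z := {y : Y // y ≠ 0}
  set U : Z → Set Z := fun z => Subtype.val ⁻¹' Metric.ball z.val (‖z.val‖ / 8) with hU
  have hUopen : ∀ z, IsOpen (U z) := fun z =>
    (Metric.isOpen_ball).preimage continuous_subtype_val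
  have hUcov : (univ : Set Z) ⊆ ⋃ z, U z := by
    intro z _
    exact Set.mem_iUnion.2 ⟨z, by
      simp only [U, Set.mem_preimage, Metric.mem_ball, dist_self]
      have : 0 < ‖z.val‖ := norm_pos_iff.2 z.2
      linarith⟩
  obtain ⟨ρ, hρ⟩ := PartitionOfUnity.exists_isSubordinate (s := (univ : Set Z))
    isClosed_univ U hUopen hUcov
  set φ₀ : Z → X := fun z => ∑ᶠ i, ρ i z • sec i.val with hφ₀
  have hφ₀cont : Continuous φ₀ :=
    hρ.continuous_finsum_smul hUopen (fun i => continuousOn_const)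
  -- if ρ i z ≠ 0 then ‖z - i‖ < ‖i‖/8 and ‖i‖ ≤ (8/7)‖z‖
  have key : ∀ (z : Z) (i : Z), ρ i z ≠ 0 →
      ‖z.val - i.val‖ ≤ ‖z.val‖ / 7 ∧ ‖i.val‖ ≤ (8/7) * ‖z.val‖ := by
    intro z i hne
    have hz : z ∈ U i := hρ i (subset_tsupport _ hne)
    have hd : ‖z.val - i.val‖ < ‖i.val‖ / 8 := by
      simpa [U, dist_eq_norm] using hz
    have h1 : ‖i.val‖ ≤ ‖z.val‖ + ‖i.val‖ / 8 := by
      have := norm_sub_norm_le i.val z.val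
      have h2 : ‖i.val - z.val‖ < ‖i.val‖ / 8 := by rwa [norm_sub_rev]
      linarith
    have h3 : ‖i.val‖ ≤ (8/7) * ‖z.val‖ := by linarith
    exact ⟨by nlinarith, h3⟩
  have bound1 : ∀ z : Z, ‖φ₀ z‖ ≤ 2 * C₀ * ‖z.val‖ := by
    intro z
    have hfin := ρ.sum_finsupport_smul_eq_finsum (fun i (_ : Z) => sec i.val) (x₀ := z)
    show ‖φ₀ z‖ ≤ _
    rw [show φ₀ z = ∑ i ∈ ρ.finsupport z, ρ i z • sec i.val from hfin.symm]
    calc ‖∑ i ∈ ρ.finsupport z, ρ i z • sec i.val‖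
        ≤ ∑ i ∈ ρ.finsupport z, ‖ρ i z • sec i.val‖ := norm_sum_le _ _
      _ ≤ ∑ i ∈ ρ.finsupport z, ρ i z * (2 * C₀ * ‖z.val‖) := by
          apply Finset.sum_le_sum
          intro i hi
          rw [norm_smul, Real.norm_eq_abs, abs_of_nonneg (ρ.nonneg i z)]
          have hne : ρ i z ≠ 0 := (ρ.mem_finsupport z).1 hi
          have hk := (key z i hne).2
          have := hsecnorm i.val
          have h5 : ‖sec i.val‖ ≤ 2 * C₀ * ‖z.val‖ := by
            nlinarith [norm_nonneg z.val]
          exact mul_le_mul_of_nonneg_left h5 (ρ.nonneg i z)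
      _ = (∑ i ∈ ρ.finsupport z, ρ i z) * (2 * C₀ * ‖z.val‖) := by
          rw [Finset.sum_mul]
      _ = 2 * C₀ * ‖z.val‖ := by rw [ρ.sum_finsupport (mem_univ z), one_mul]
  have bound2 : ∀ z : Z, ‖z.val - Q (φ₀ z)‖ ≤ ‖z.val‖ / 2 := by
    intro z
    have hfin := ρ.sum_finsupport_smul_eq_finsum (fun i (_ : Z) => sec i.val) (x₀ := z)
    have hQφ : Q (φ₀ z) = ∑ i ∈ ρ.finsupport z, ρ i z • i.val := by
      rw [show φ₀ z = ∑ i ∈ ρ.finsupport z, ρ i z • sec i.val from hfin.symm, map_sum]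
      exact Finset.sum_congr rfl fun i _ => by rw [map_smul, hsec]
    have hkey : ∑ i ∈ ρ.finsupport z, ρ i z • (z.val - i.val)
        = z.val - ∑ i ∈ ρ.finsupport z, ρ i z • i.val := by
      simp only [smul_sub]
      rw [Finset.sum_sub_distrib, ← Finset.sum_smul, ρ.sum_finsupport (mem_univ z), one_smul]
    calc ‖z.val - Q (φ₀ z)‖
        = ‖∑ i ∈ ρ.finsupport z, ρ i z • (z.val - i.val)‖ := by
          rw [hQφ, hkey]
      _ ≤ ∑ i ∈ ρ.finsupport z, ‖ρ i z • (z.val - i.val)‖ := norm_sum_le _ _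
      _ ≤ ∑ i ∈ ρ.finsupport z, ρ i z * (‖z.val‖ / 7) := by
          apply Finset.sum_le_sum
          intro i hi
          rw [norm_smul, Real.norm_eq_abs, abs_of_nonneg (ρ.nonneg i z)]
          have hne : ρ i z ≠ 0 := (ρ.mem_finsupport z).1 hi
          have hk := (key z i hne).1
          exact mul_le_mul_of_nonneg_left hk (ρ.nonneg i z)
      _ = (∑ i ∈ ρ.finsupport z, ρ i z) * (‖z.val‖ / 7) := by rw [Finset.sum_mul]
      _ = ‖z.val‖ / 7 := by rw [ρ.sum_finsupport (mem_univ z), one_mul]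
      _ ≤ ‖z.val‖ / 2 := by have := norm_nonneg z.val; linarith
  -- extend to all of Y
  classical
  set φ : Y → X := fun y => if h : y = 0 then 0 else φ₀ ⟨y, h⟩ with hφdef
  have hφnorm : ∀ y, ‖φ y‖ ≤ 2 * C₀ * ‖y‖ := by
    intro y
    by_cases h : y = 0
    · simp [hφdef, h]
    · simpa [hφdef, h] using bound1 ⟨y, h⟩
  have hφerr : ∀ y, ‖y - Q (φ y)‖ ≤ ‖y‖ / 2 := by
    intro y
    by_cases h : y = 0
    · simp [hφdef, h]
    · simpa [hφdef, h] using bound2 ⟨y, h⟩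
  have hφcont : Continuous φ := by
    rw [continuous_iff_continuousAt]
    intro y
    by_cases h : y = 0
    · subst h
      have : Tendsto φ (𝓝 0) (𝓝 0) := by
        apply squeeze_zero_norm hφnorm
        have : Tendsto (fun y : Y => 2 * C₀ * ‖y‖) (𝓝 0) (𝓝 (2 * C₀ * ‖(0:Y)‖)) :=
          (continuous_const.mul continuous_norm).tendsto 0
        simpa using this
      simpa [ContinuousAt, hφdef] using this
    · have hopen : IsOpen {y : Y | y ≠ 0} := isOpen_ne
      have hco : ContinuousOn φ {y : Y | y ≠ 0} := by
        rw [continuousOn_iff_continuous_restrict]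
        have : Set.domRestrict {y : Y | y ≠ 0} φ = φ₀ := by
          funext z
          have hz : z.val ≠ 0 := z.2
          simp only [Set.domRestrict_apply, hφdef, dif_neg hz]
          rfl
        rw [this]
        exact hφ₀cont
      exact hco.continuousAt (hopen.mem_nhds h)
  exact ⟨2 * C₀, φ, by positivity, hφcont, hφnorm, hφerr⟩

/-- Bartle–Graves: a surjective CLM between Banach spaces has a continuous right inverse. -/
lemma bartle_graves
    {X : Type*} [NormedAddCommGroup X] [NormedSpace ℝ X] [CompleteSpace X]
    {Y : Type*} [NormedAddCommGroup Y] [NormedSpace ℝ Y] [CompleteSpace Y]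
    (Q : X →L[ℝ] Y) (hQ : Function.Surjective Q) :
    ∃ Ψ : Y → X, Continuous Ψ ∧ ∀ y, Q (Ψ y) = y := by
  obtain ⟨C, φ, hC, hφc, hφn, hφe⟩ := approx_section Q hQ
  set u : ℕ → Y → X := fun n =>
    Nat.rec φ (fun _ un => fun y => un y + φ (y - Q (un y))) n with hu
  have husucc : ∀ n y, u (n+1) y = u n y + φ (y - Q (u n y)) := fun n y => rfl
  have hucont : ∀ n, Continuous (u n) := by
    intro n; induction n with
    | zero => exact hφc
    | succ n ih => exact ih.add (hφc.comp (continuous_id.sub (Q.continuous.comp ih)))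
  have herr : ∀ n y, ‖y - Q (u n y)‖ ≤ (1/2)^(n+1) * ‖y‖ := by
    intro n
    induction n with
    | zero =>
      intro y
      have : (1/2:ℝ)^(0+1) * ‖y‖ = ‖y‖ / 2 := by ring
      rw [this]
      exact hφe y
    | succ n ih =>
      intro y
      have heq : y - Q (u (n+1) y) = (y - Q (u n y)) - Q (φ (y - Q (u n y))) := by
        rw [husucc, map_add]; abel
      rw [heq]
      calc ‖(y - Q (u n y)) - Q (φ (y - Q (u n y)))‖
          ≤ ‖y - Q (u n y)‖ / 2 := hφe _
        _ ≤ ((1/2)^(n+1) * ‖y‖) / 2 := by linarith [ih y]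
        _ = (1/2)^(n+1+1) * ‖y‖ := by ring
  have hdiff : ∀ n y, dist (u n y) (u (n+1) y) ≤ (C * ‖y‖ / 2) * (1/2)^n := by
    intro n y
    rw [dist_eq_norm, norm_sub_rev, husucc, add_sub_cancel_left]
    calc ‖φ (y - Q (u n y))‖ ≤ C * ‖y - Q (u n y)‖ := hφn _
      _ ≤ C * ((1/2)^(n+1) * ‖y‖) := mul_le_mul_of_nonneg_left (herr n y) hC.le
      _ = (C * ‖y‖ / 2) * (1/2)^n := by ring
  have hcauchy : ∀ y, CauchySeq (fun n => u n y) := fun y =>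
    cauchySeq_of_le_geometric (1/2) (C * ‖y‖ / 2) (by norm_num) (hdiff · y)
  choose Ψ hΨlim using fun y => cauchySeq_tendsto_of_complete (hcauchy y)
  have hQΨ : ∀ y, Q (Ψ y) = y := by
    intro y
    have h1 : Tendsto (fun n => Q (u n y)) atTop (𝓝 (Q (Ψ y))) :=
      (Q.continuous.tendsto _).comp (hΨlim y)
    have h2 : Tendsto (fun n => y - Q (u n y)) atTop (𝓝 0) := by
      apply squeeze_zero_norm (fun n => herr n y)
      have : Tendsto (fun n : ℕ => (1/2 : ℝ)^(n+1)) atTop (𝓝 0) :=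
        (tendsto_pow_atTop_nhds_zero_of_lt_one (by norm_num) (by norm_num)).comp
          (tendsto_add_atTop_nat 1)
      simpa using this.mul_const ‖y‖
    have h3 : Tendsto (fun n => Q (u n y)) atTop (𝓝 y) := by
      have h4 := Filter.Tendsto.sub (tendsto_const_nhds (x := y) (f := atTop)) h2
      simpa using h4
    exact tendsto_nhds_unique h1 h3
  have hdistlim : ∀ (n : ℕ) (y : Y), dist (u n y) (Ψ y) ≤ C * ‖y‖ * (1/2)^n := by
    intro n y
    have := dist_le_of_le_geometric_of_tendsto (1/2) (C * ‖y‖ / 2)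
      (by norm_num) (hdiff · y) (hΨlim y) n
    calc dist (u n y) (Ψ y) ≤ (C * ‖y‖ / 2) * (1/2)^n / (1 - 1/2) := this
      _ = C * ‖y‖ * (1/2)^n := by ring
  have hΨcont : Continuous Ψ := by
    rw [continuous_iff_continuousAt]
    intro y₀
    set R : ℝ := ‖y₀‖ + 1 with hR
    have hRpos : 0 < R := by positivity
    have hball : ∀ y ∈ Metric.ball y₀ 1, ‖y‖ ≤ R := by
      intro y hy
      have : ‖y - y₀‖ < 1 := by simpa [dist_eq_norm] using hy
      have := norm_sub_norm_le y y₀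
      simp only [hR]; linarith
    have huniform : TendstoUniformlyOn u Ψ atTop (Metric.ball y₀ 1) := by
      rw [Metric.tendstoUniformlyOn_iff]
      intro ε hε
      have hto : Tendsto (fun n : ℕ => C * R * (1/2)^n) atTop (𝓝 0) := by
        simpa using (tendsto_pow_atTop_nhds_zero_of_lt_one (by norm_num : (0:ℝ) ≤ 1/2)
          (by norm_num)).const_mul (C * R)
      filter_upwards [hto.eventually (gt_mem_nhds hε)] with n hn y hy
      rw [dist_comm]
      calc dist (u n y) (Ψ y) ≤ C * ‖y‖ * (1/2)^n := hdistlim n y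
        _ ≤ C * R * (1/2)^n := by
            have h1 : (0:ℝ) ≤ (1/2:ℝ)^n := by positivity
            exact mul_le_mul_of_nonneg_right
              (mul_le_mul_of_nonneg_left (hball y hy) hC.le) h1
        _ < ε := hn
    have hcΨ : ContinuousOn Ψ (Metric.ball y₀ 1) :=
      huniform.continuousOn (Eventually.of_forall fun n => (hucont n).continuousOn).frequently
    exact hcΨ.continuousAt (Metric.ball_mem_nhds y₀ one_pos)
  exact ⟨Ψ, hΨcont, hQΨ⟩


theorem nosolution_lifts_through_quotient
    {X : Type*} [NormedAddCommGroup X] [NormedSpace ℝ X] [CompleteSpace X]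
    {Y : Type*} [NormedAddCommGroup Y] [NormedSpace ℝ Y] [CompleteSpace Y]
    (Q : X →L[ℝ] Y) (hQ : Function.Surjective Q)
    (g : ℝ × Y → Y) (hg : Continuous g)
    (hnosol : ¬ ∃ (a b : ℝ) (y : ℝ → Y), a < b ∧
        ∀ t ∈ Set.Ioo a b, HasDerivAt y (g (t, y t)) t) :
    ∃ f : ℝ × X → X, Continuous f ∧ ¬ ∃ (a b : ℝ) (x : ℝ → X), a < b ∧
        ∀ t ∈ Set.Ioo a b, HasDerivAt x (f (t, x t)) t := by
  obtain ⟨Ψ, hΨc, hΨsec⟩ := bartle_graves Q hQ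
  refine ⟨fun p => Ψ (g (p.1, Q p.2)), hΨc.comp (hg.comp
    (continuous_fst.prodMk (Q.continuous.comp continuous_snd))), ?_⟩
  rintro ⟨a, b, x, hab, hx⟩
  apply hnosol
  refine ⟨a, b, fun t => Q (x t), hab, fun t ht => ?_⟩
  have hd : HasDerivAt (fun t => Q (x t))
      (Q (Ψ (g (t, Q (x t))))) t :=
    (Q.hasFDerivAt).comp_hasDerivAt t (hx t ht)
  rwa [hΨsec] at hd
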